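/- Let A ∈ ℝ^{m×d}, Y ∈ ℝ^{m×n}, λ > 0, and 0 < p < 2. Let X_k ∈ ℝ^{d×n} be such that every row of X_k is nonzero. Define the diagonal matrix H_k ∈ ℝ^{d×d} with (H_k)_{ii} = 1/‖X_k^i‖₂^{2−p}, define Q_k(X) = Tr((AX − Y)ᵀ(AX − Y)) + λ·(p/2)·Tr(XᵀH_kX), and define J(X) = Σ_{i=1}^m ‖(AX − Y)^i‖₂² + λ·Σ_{i=1}^d ‖X^i‖₂^p. If X_{k+1} ∈ ℝ^{d×n} satisfies Q_k(X_{k+1}) ≤ Q_k(X_k), then J(X_{k+1}) ≤ J(X_k). -/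

import Mathlib

open Matrix

/-- Euclidean norm of the i-th row of a matrix. -/
noncomputable def rowNorm {m n : ℕ} (M : Matrix (Fin m) (Fin n) ℝ) (i : Fin m) : ℝ :=
  Real.sqrt (∑ j, M i j ^ 2)

lemma rowNorm_nonneg {m n : ℕ} (M : Matrix (Fin m) (Fin n) ℝ) (i : Fin m) :
    0 ≤ rowNorm M i := Real.sqrt_nonneg _

lemma rowNorm_sq {m n : ℕ} (M : Matrix (Fin m) (Fin n) ℝ) (i : Fin m) :
    rowNorm M i ^ 2 = ∑ j, M i j ^ 2 :=
  Real.sq_sqrt (Finset.sum_nonneg fun _ _ => sq_nonneg _)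

lemma rowNorm_pos {m n : ℕ} (M : Matrix (Fin m) (Fin n) ℝ) (i : Fin m) (h : M i ≠ 0) :
    0 < rowNorm M i := by
  apply Real.sqrt_pos.2
  obtain ⟨j, hj⟩ := Function.ne_iff.1 h
  exact Finset.sum_pos' (fun j _ => sq_nonneg _)
    ⟨j, Finset.mem_univ _, by simpa using sq_pos_of_ne_zero hj⟩

lemma trace_transpose_mul_self {m n : ℕ} (M : Matrix (Fin m) (Fin n) ℝ) :
    Matrix.trace (Mᵀ * M) = ∑ i, rowNorm M i ^ 2 := by
  simp only [Matrix.trace, Matrix.diag, Matrix.mul_apply, Matrix.transpose_apply, rowNorm_sq]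
  rw [Finset.sum_comm]
  simp [sq]

lemma trace_weighted {d n : ℕ} (h : Fin d → ℝ) (X : Matrix (Fin d) (Fin n) ℝ) :
    Matrix.trace (Xᵀ * Matrix.diagonal h * X) = ∑ i, h i * rowNorm X i ^ 2 := by
  rw [Matrix.mul_assoc]
  simp only [Matrix.trace, Matrix.diag, Matrix.mul_apply, Matrix.transpose_apply,
    Matrix.diagonal_mul, rowNorm_sq]
  rw [Finset.sum_comm]
  refine Finset.sum_congr rfl fun i _ => ?_
  rw [Finset.mul_sum]
  refine Finset.sum_congr rfl fun j _ => ?_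
  simp [Matrix.diagonal_apply, ite_mul, Finset.mul_sum, Finset.sum_ite_eq, sq]
  ring

lemma key_ineq {s t p : ℝ} (hs : 0 < s) (ht : 0 ≤ t) (hp0 : 0 < p) (hp2 : p < 2) :
    t ^ p - p / 2 * (1 / s ^ (2 - p) * t ^ 2) ≤ s ^ p - p / 2 * (1 / s ^ (2 - p) * s ^ 2) := by
  set u := t / s with hu
  have hu0 : 0 ≤ u := div_nonneg ht hs.le
  have h1 : u ^ p ≤ 1 + p / 2 * (u ^ 2 - 1) := by
    have h := rpow_one_add_le_one_add_mul_self (s := u ^ 2 - 1) (by nlinarith)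
      (p := p / 2) (by linarith) (by linarith)
    have e : (1 + (u ^ 2 - 1)) = u ^ 2 := by ring
    rw [e] at h
    calc u ^ p = (u ^ 2) ^ (p / 2) := by
          rw [← Real.rpow_two, ← Real.rpow_mul hu0, show (2:ℝ) * (p/2) = p by ring]
      _ ≤ 1 + p / 2 * (u ^ 2 - 1) := h
  have hsp : (0:ℝ) < s ^ p := Real.rpow_pos_of_pos hs p
  have hs2p : (0:ℝ) < s ^ (2 - p) := Real.rpow_pos_of_pos hs _
  have hs2 : s ^ p * s ^ (2 - p) = s ^ 2 := by
    rw [← Real.rpow_add hs, ← Real.rpow_two]; norm_num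
  have hA : 1 / s ^ (2 - p) * s ^ 2 = s ^ p := by
    rw [← hs2]; field_simp
  have htp : t ^ p = u ^ p * s ^ p := by
    rw [← Real.mul_rpow hu0 hs.le, hu, div_mul_cancel₀ _ hs.ne']
  have ht2 : t ^ 2 = u ^ 2 * s ^ 2 := by
    rw [hu]; field_simp
  have hB : 1 / s ^ (2 - p) * t ^ 2 = u ^ 2 * s ^ p := by
    rw [ht2, ← hs2]; field_simp
  rw [htp, hA, hB]
  nlinarith [mul_le_mul_of_nonneg_right h1 hsp.le]

/-- One-step descent of the IQM in the case q = 2: if Q_k(X_{k+1}) ≤ Q_k(X_k)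
then J(X_{k+1}) ≤ J(X_k), for 0 < p < 2. -/
theorem stmt_13 {m d n : ℕ} (A : Matrix (Fin m) (Fin d) ℝ) (Y : Matrix (Fin m) (Fin n) ℝ)
    (lam p : ℝ) (hlam : 0 < lam) (hp0 : 0 < p) (hp2 : p < 2)
    (Xk Xk1 : Matrix (Fin d) (Fin n) ℝ)
    (hrowX : ∀ i, Xk i ≠ 0) :
    let Hk : Matrix (Fin d) (Fin d) ℝ :=
      Matrix.diagonal (fun i => 1 / rowNorm Xk i ^ (2 - p))
    let Qk : Matrix (Fin d) (Fin n) ℝ → ℝ := fun X =>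
      Matrix.trace ((A * X - Y)ᵀ * (A * X - Y)) + lam * (p / 2) * Matrix.trace (Xᵀ * Hk * X)
    let J : Matrix (Fin d) (Fin n) ℝ → ℝ := fun X =>
      ∑ i, rowNorm (A * X - Y) i ^ 2 + lam * ∑ i, rowNorm X i ^ p
    Qk Xk1 ≤ Qk Xk → J Xk1 ≤ J Xk := by
  intro Hk Qk J hQ
  set h : Fin d → ℝ := fun i => 1 / rowNorm Xk i ^ (2 - p) with hh
  have e : ∀ X : Matrix (Fin d) (Fin n) ℝ,
      J X = Qk X + lam * ∑ i, (rowNorm X i ^ p - p / 2 * (h i * rowNorm X i ^ 2)) := by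
    intro X
    simp only [J, Qk, Hk, trace_transpose_mul_self, trace_weighted,
      Finset.sum_sub_distrib, Finset.mul_sum]
    ring_nf
    rw [Finset.mul_sum, Finset.mul_sum]
    ring_nf
    simp only [hh, one_div]
    ring
  have hsum : ∑ i, (rowNorm Xk1 i ^ p - p / 2 * (h i * rowNorm Xk1 i ^ 2))
      ≤ ∑ i, (rowNorm Xk i ^ p - p / 2 * (h i * rowNorm Xk i ^ 2)) := by
    refine Finset.sum_le_sum fun i _ => ?_
    exact key_ineq (rowNorm_pos Xk i (hrowX i)) (rowNorm_nonneg Xk1 i) hp0 hp2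
  have := mul_le_mul_of_nonneg_left hsum hlam.le
  rw [e Xk1, e Xk]
  exact add_le_add hQ this
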